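/- arXiv:1904.08855 — 2 statements merged into one kernel-verified Lean document; each statement's English description precedes it below -/
import Mathlib

section
/- Suppose conditions (C) hold: γ(S,σ) + 2ξ(S)·η(σ) < 1 and ξ(S) − η(σ) ≤ 1, and suppose ξ_i(S) > 0 for all i. Then every u ∈ ℂ^n with all components nonzero satisfying u = F(u) and |u_i − 1| < r̄·|u_i| for all i must satisfy |u_i − (1 − η_i(σ))| ≤ r̲·ξ_i(S) for all i. In other words, there are no fixed points of F in U(r̄) outside the closure of D(r̲). -/
open Complex

/-- `η_i(σ) := Σ_j Z̃_{ij} · conj(σ_j)` -/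
noncomputable def etaI {n : ℕ} (Z : Matrix (Fin n) (Fin n) ℂ) (σ : Fin n → ℂ) (i : Fin n) : ℂ :=
  ∑ j, Z i j * (starRingEnd ℂ) (σ j)

/-- `ξ_i(S) := Σ_j |Z̃_{ij} · S_j|` -/
noncomputable def xiI {n : ℕ} (Z : Matrix (Fin n) (Fin n) ℂ) (S : Fin n → ℂ) (i : Fin n) : ℝ :=
  ∑ j, ‖Z i j * S j‖

/-- `γ_i(S,σ) := 2(ξ_i(S) + Re η_i(σ)) − ξ_i(S)² − |η_i(σ)|²` -/
noncomputable def gammaI {n : ℕ} (Z : Matrix (Fin n) (Fin n) ℂ) (S σ : Fin n → ℂ)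
    (i : Fin n) : ℝ :=
  2 * (xiI Z S i + (etaI Z σ i).re) - (xiI Z S i) ^ 2 - (‖etaI Z σ i‖) ^ 2

/-- `η(σ) := max_i |η_i(σ)|` -/
noncomputable def etaMax {n : ℕ} (Z : Matrix (Fin n) (Fin n) ℂ) (σ : Fin n → ℂ) : ℝ :=
  ⨆ i, ‖etaI Z σ i‖

/-- `ξ(S) := max_i ξ_i(S)` -/
noncomputable def xiMax {n : ℕ} (Z : Matrix (Fin n) (Fin n) ℂ) (S : Fin n → ℂ) : ℝ :=
  ⨆ i, xiI Z S i

/-- `γ(S,σ) := max_i γ_i(S,σ)` -/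
noncomputable def gammaMax {n : ℕ} (Z : Matrix (Fin n) (Fin n) ℂ) (S σ : Fin n → ℂ) : ℝ :=
  ⨆ i, gammaI Z S σ i

/-- `r̲ := sqrt((1−γ − √Δ)/(2ξ(S)²))` where `Δ = (1−γ)² − 4ξ(S)²η(σ)²` -/
noncomputable def rLow {n : ℕ} (Z : Matrix (Fin n) (Fin n) ℂ) (S σ : Fin n → ℂ) : ℝ :=
  Real.sqrt ((1 - gammaMax Z S σ -
      Real.sqrt ((1 - gammaMax Z S σ) ^ 2 - 4 * (xiMax Z S) ^ 2 * (etaMax Z σ) ^ 2)) /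
    (2 * (xiMax Z S) ^ 2))

/-- `r̄ := sqrt((1−γ + √Δ)/(2ξ(S)²))` where `Δ = (1−γ)² − 4ξ(S)²η(σ)²` -/
noncomputable def rHigh {n : ℕ} (Z : Matrix (Fin n) (Fin n) ℂ) (S σ : Fin n → ℂ) : ℝ :=
  Real.sqrt ((1 - gammaMax Z S σ +
      Real.sqrt ((1 - gammaMax Z S σ) ^ 2 - 4 * (xiMax Z S) ^ 2 * (etaMax Z σ) ^ 2)) /
    (2 * (xiMax Z S) ^ 2))

/-- the fixed point power flow map
`F(u)_i := 1 − Σ_j Z̃_{ij}·conj(σ_j) + Σ_j Z̃_{ij}·(1 − 1/conj(u_j))·conj(S_j)` -/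
noncomputable def pfMap {n : ℕ} (Z : Matrix (Fin n) (Fin n) ℂ) (S σ : Fin n → ℂ)
    (u : Fin n → ℂ) : Fin n → ℂ :=
  fun i => 1 - ∑ j, Z i j * (starRingEnd ℂ) (σ j)
    + ∑ j, Z i j * (1 - 1 / (starRingEnd ℂ) (u j)) * (starRingEnd ℂ) (S j)

private lemma sq_abs_affine (a b : ℝ) (z : ℂ) :
    ‖(a : ℂ) * z + (b : ℂ)‖ ^ 2 = (a * z.re + b) ^ 2 + (a * z.im) ^ 2 := by
  rw [Complex.sq_norm, Complex.normSq_apply]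
  simp [Complex.add_re, Complex.add_im, Complex.mul_re, Complex.mul_im,
    Complex.ofReal_re, Complex.ofReal_im]
  ring

set_option maxHeartbeats 1000000 in
private lemma ratio_lt_of_Q (t ξr : ℝ) (η c : ℂ) (ht : 0 < t) (hξ : 0 ≤ ξr)
    (hK : t < 1 → (1 - t ^ 2) * ξr < 1)
    (hdist : ‖c - η‖ ≤ t * ξr)
    (hQ : ξr ^ 2 * t ^ 4
        - (1 - (2 * (ξr + η.re) - ξr ^ 2 - ‖η‖ ^ 2)) * t ^ 2
        + ‖η‖ ^ 2 < 0) :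
    ‖c‖ < t * ‖1 - c‖ := by
  have hη2 : ‖η‖ ^ 2 = η.re ^ 2 + η.im ^ 2 := by
    rw [Complex.sq_norm, Complex.normSq_apply]; ring
  rw [hη2] at hQ
  have hMv := sq_abs_affine (1 - t ^ 2) (t ^ 2) η
  have hNw := sq_abs_affine (1 - t ^ 2) (t ^ 2) c
  set v : ℂ := ((1 - t ^ 2 : ℝ) : ℂ) * η + ((t ^ 2 : ℝ) : ℂ) with hvdef
  set w : ℂ := ((1 - t ^ 2 : ℝ) : ℂ) * c + ((t ^ 2 : ℝ) : ℂ) with hwdef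
  have key : (1 - t ^ 2) * (c.re ^ 2 + c.im ^ 2) + 2 * t ^ 2 * c.re - t ^ 2 < 0 := by
    rcases lt_trichotomy t 1 with hlt | heq | hgt
    · -- t < 1
      have ha : 0 < 1 - t ^ 2 := by nlinarith
      have hKp := hK hlt
      have hKpos : 0 < 1 - (1 - t ^ 2) * ξr := by linarith
      have hQneg : (0:ℝ) < -(ξr ^ 2 * t ^ 4
          - (1 - (2 * (ξr + η.re) - ξr ^ 2 - (η.re ^ 2 + η.im ^ 2))) * t ^ 2
          + (η.re ^ 2 + η.im ^ 2)) := by linarith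
      have hMsq : ‖v‖ ^ 2 < (t * (1 - (1 - t ^ 2) * ξr)) ^ 2 := by
        rw [hMv]; nlinarith [mul_pos ha hQneg]
      have hM : ‖v‖ < t * (1 - (1 - t ^ 2) * ξr) :=
        lt_of_pow_lt_pow_left₀ 2 (by positivity) hMsq
      have htri : ‖w‖ ≤ ‖v‖ + (1 - t ^ 2) * ‖c - η‖ := by
        have hw2 : w = v + ((1 - t ^ 2 : ℝ) : ℂ) * (c - η) := by
          rw [hvdef, hwdef]; ring
        rw [hw2]
        refine le_trans (norm_add_le _ _) ?_
        rw [norm_mul, Complex.norm_real, Real.norm_eq_abs, abs_of_pos ha]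
      have hN : ‖w‖ < t := by
        have h5 := mul_le_mul_of_nonneg_left hdist ha.le
        nlinarith [htri, hM]
      have hN2 : ‖w‖ ^ 2 < t ^ 2 := by
        nlinarith [norm_nonneg w, hN]
      rw [hNw] at hN2
      nlinarith [hN2, ha]
    · -- t = 1
      subst heq
      have hre : c.re - η.re ≤ ‖c - η‖ := by
        have h := Complex.re_le_norm (c - η)
        simpa [Complex.sub_re] using h
      nlinarith [hre, hdist, hQ]
    · -- t > 1
      have ha : 1 - t ^ 2 < 0 := by nlinarith
      have hKpos : 0 < 1 - (1 - t ^ 2) * ξr := by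
        nlinarith [mul_nonneg (by linarith : (0:ℝ) ≤ t ^ 2 - 1) hξ]
      have hQneg : (0:ℝ) < -(ξr ^ 2 * t ^ 4
          - (1 - (2 * (ξr + η.re) - ξr ^ 2 - (η.re ^ 2 + η.im ^ 2))) * t ^ 2
          + (η.re ^ 2 + η.im ^ 2)) := by linarith
      have hMsq : (t * (1 - (1 - t ^ 2) * ξr)) ^ 2 < ‖v‖ ^ 2 := by
        rw [hMv]; nlinarith [mul_pos (by linarith : (0:ℝ) < -(1 - t ^ 2)) hQneg]
      have hM : t * (1 - (1 - t ^ 2) * ξr) < ‖v‖ :=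
        lt_of_pow_lt_pow_left₀ 2 (norm_nonneg _) hMsq
      have htri : ‖v‖ ≤ ‖w‖ + (t ^ 2 - 1) * ‖c - η‖ := by
        have hw2 : v = w + ((1 - t ^ 2 : ℝ) : ℂ) * (η - c) := by
          rw [hvdef, hwdef]; ring
        rw [hw2]
        refine le_trans (norm_add_le _ _) ?_
        rw [norm_mul, Complex.norm_real, Real.norm_eq_abs, abs_of_neg ha, norm_sub_rev]
        linarith
      have hN : t < ‖w‖ := by
        have h5 := mul_le_mul_of_nonneg_left hdist (by linarith : (0:ℝ) ≤ t ^ 2 - 1)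
        nlinarith [htri, hM]
      have hN2 : t ^ 2 < ‖w‖ ^ 2 := by
        nlinarith [ht, hN]
      rw [hNw] at hN2
      nlinarith [hN2, ha]
  have hgoal : ‖c‖ ^ 2 < (t * ‖1 - c‖) ^ 2 := by
    have h1 : ‖c‖ ^ 2 = c.re ^ 2 + c.im ^ 2 := by
      rw [Complex.sq_norm, Complex.normSq_apply]; ring
    have h2 : ‖1 - c‖ ^ 2 = (1 - c.re) ^ 2 + c.im ^ 2 := by
      rw [Complex.sq_norm, Complex.normSq_apply]
      simp [Complex.sub_re, Complex.sub_im]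
      ring
    rw [mul_pow, h1, h2]
    nlinarith [key]
  exact lt_of_pow_lt_pow_left₀ 2 (by positivity) hgoal

set_option maxHeartbeats 1000000 in
/-- under conditions (C) with `ξ_i(S) > 0` for all `i`, every fixed point
of `F` lying in `U(r̄) = {u : u_i ≠ 0, |u_i − 1| < r̄·|u_i|}` lies in the closure of
`D(r̲)`. -/
theorem no_pf_fixed_point_outside {n : ℕ} (hn : 1 ≤ n)
    (Z : Matrix (Fin n) (Fin n) ℂ) (hZ : IsUnit Z.det)
    (S0 σ S : Fin n → ℂ) (hS : S = S0 + σ)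
    (hc1 : gammaMax Z S σ + 2 * xiMax Z S * etaMax Z σ < 1)
    (hc2 : xiMax Z S - etaMax Z σ ≤ 1)
    (hxi : ∀ i, 0 < xiI Z S i) :
    ∀ u : Fin n → ℂ, (∀ i, u i ≠ 0) → pfMap Z S σ u = u →
      (∀ i, ‖u i - 1‖ < rHigh Z S σ * ‖u i‖) →
      ∀ i, ‖u i - (1 - etaI Z σ i)‖ ≤ rLow Z S σ * xiI Z S i := by
  intro u hu hfix hUr
  have hne : Nonempty (Fin n) := ⟨⟨0, hn⟩⟩
  set ξb := xiMax Z S with hξb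
  set ηb := etaMax Z σ with hηb
  set γb := gammaMax Z S σ with hγb
  have hxi_le : ∀ j, xiI Z S j ≤ ξb := by
    intro j; rw [hξb]; simp only [xiMax]
    exact le_ciSup (Set.Finite.bddAbove (Set.finite_range _)) j
  have heta_le : ∀ j, ‖etaI Z σ j‖ ≤ ηb := by
    intro j; rw [hηb]; simp only [etaMax]
    exact le_ciSup (f := fun i => ‖etaI Z σ i‖)
      (Set.Finite.bddAbove (Set.finite_range _)) j
  have hgam_le : ∀ j, gammaI Z S σ j ≤ γb := by
    intro j; rw [hγb]; simp only [gammaMax]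
    exact le_ciSup (Set.Finite.bddAbove (Set.finite_range _)) j
  have hξpos : 0 < ξb := lt_of_lt_of_le (hxi ⟨0, hn⟩) (hxi_le _)
  have hηnn : 0 ≤ ηb := le_trans (norm_nonneg _) (heta_le ⟨0, hn⟩)
  set G := 1 - γb with hGdef
  have hG : 2 * ξb * ηb < G := by rw [hGdef]; linarith
  have hGpos : 0 < G := lt_of_le_of_lt (by positivity) hG
  set Δ := G ^ 2 - 4 * ξb ^ 2 * ηb ^ 2 with hΔdef
  have h2ξη : 0 ≤ 2 * ξb * ηb := by positivity
  have hΔnn : 0 ≤ Δ := by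
    rw [hΔdef]
    nlinarith [mul_nonneg (show (0:ℝ) ≤ G - 2 * ξb * ηb by linarith)
      (show (0:ℝ) ≤ G + 2 * ξb * ηb by linarith)]
  set s := Real.sqrt Δ with hsdef
  have hs2 : s ^ 2 = Δ := Real.sq_sqrt hΔnn
  have hsnn : 0 ≤ s := Real.sqrt_nonneg _
  have hsleG : s ≤ G := by
    rw [hsdef]
    calc Real.sqrt Δ ≤ Real.sqrt (G ^ 2) := Real.sqrt_le_sqrt (by nlinarith)
      _ = G := Real.sqrt_sq hGpos.le
  have hrlsq : rLow Z S σ ^ 2 = (G - s) / (2 * ξb ^ 2) := by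
    have hnn : 0 ≤ (G - s) / (2 * ξb ^ 2) := div_nonneg (by linarith) (by positivity)
    simp only [rLow]
    rw [← hγb, ← hξb, ← hηb, ← hGdef, ← hΔdef, ← hsdef, Real.sq_sqrt hnn]
  have hrhsq : rHigh Z S σ ^ 2 = (G + s) / (2 * ξb ^ 2) := by
    have hnn : 0 ≤ (G + s) / (2 * ξb ^ 2) := div_nonneg (by linarith) (by positivity)
    simp only [rHigh]
    rw [← hγb, ← hξb, ← hηb, ← hGdef, ← hΔdef, ← hsdef, Real.sq_sqrt hnn]
  have hrlnn : 0 ≤ rLow Z S σ := by simp only [rLow]; positivity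
  -- Lemma A : ξb * (1 - rLow²) ≤ 1
  have hR : 0 ≤ G - 2 * ξb * (ξb - 1) := by
    nlinarith [mul_nonneg hξpos.le (by linarith : (0:ℝ) ≤ ηb - (ξb - 1))]
  have hDle : Δ ≤ (G - 2 * ξb * (ξb - 1)) ^ 2 := by
    rcases le_or_gt ξb 1 with h1 | h1
    · rw [hΔdef]
      nlinarith [mul_nonneg (mul_nonneg hξpos.le (by linarith : (0:ℝ) ≤ 1 - ξb)) hGpos.le,
        sq_nonneg (ξb * ηb), sq_nonneg (ξb * (ξb - 1))]
    · obtain ⟨m, -, hm⟩ := Finset.exists_max_image Finset.univ (xiI Z S)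
        ⟨⟨0, hn⟩, Finset.mem_univ _⟩
      have hξm : xiI Z S m = ξb := le_antisymm (hxi_le m)
        (by rw [hξb]; simp only [xiMax]; exact ciSup_le fun j => hm j (Finset.mem_univ j))
      have hG0 : G ≤ (1 - ξb) ^ 2 + 2 * ηb + ηb ^ 2 := by
        have h2 := hgam_le m
        simp only [gammaI] at h2
        rw [hξm] at h2
        have h3 : -(etaI Z σ m).re ≤ ‖etaI Z σ m‖ :=
          le_trans (neg_le_abs _) (Complex.abs_re_le_norm _)
        have h4 := heta_le m
        have h5 : ‖etaI Z σ m‖ ^ 2 ≤ ηb ^ 2 :=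
          pow_le_pow_left₀ (norm_nonneg _) h4 2
        rw [hGdef]
        nlinarith [norm_nonneg (etaI Z σ m)]
      rw [hΔdef]
      nlinarith [mul_le_mul_of_nonneg_left hG0
          (by nlinarith : (0:ℝ) ≤ 4 * ξb * (ξb - 1)),
        mul_nonneg hξpos.le (sq_nonneg (ηb - (ξb - 1)))]
  have hsle : s ≤ G - 2 * ξb * (ξb - 1) := by
    rw [hsdef]
    calc Real.sqrt Δ ≤ Real.sqrt ((G - 2 * ξb * (ξb - 1)) ^ 2) := Real.sqrt_le_sqrt hDle
      _ = G - 2 * ξb * (ξb - 1) := Real.sqrt_sq hR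
  have hA : ξb * (1 - rLow Z S σ ^ 2) ≤ 1 := by
    rw [hrlsq]
    have he : ξb * (1 - (G - s) / (2 * ξb ^ 2)) = ξb - (G - s) / (2 * ξb) := by
      field_simp
    rw [he]
    have h2 : ξb - 1 ≤ (G - s) / (2 * ξb) := by
      rw [le_div_iff₀ (by positivity)]
      nlinarith [hsle]
    linarith
  -- the maximal voltage ratio
  obtain ⟨i0, -, hi0⟩ := Finset.exists_max_image Finset.univ
    (fun j => ‖u j - 1‖ / ‖u j‖) ⟨⟨0, hn⟩, Finset.mem_univ _⟩
  have hupos : ∀ j, 0 < ‖u j‖ := fun j => norm_pos_iff.mpr (hu j)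
  set t := ‖u i0 - 1‖ / ‖u i0‖ with htdef
  have htn : 0 ≤ t := div_nonneg (norm_nonneg _) (norm_nonneg _)
  have hratio_le : ∀ j, ‖u j - 1‖ / ‖u j‖ ≤ t := fun j =>
    hi0 j (Finset.mem_univ j)
  have hth : t < rHigh Z S σ := by
    rw [htdef, div_lt_iff₀ (hupos i0)]
    exact hUr i0
  -- fixed point bound
  have hw : ∀ k, ‖u k - (1 - etaI Z σ k)‖ ≤ xiI Z S k * t := by
    intro k
    have hk : u k - (1 - etaI Z σ k)
        = ∑ j, Z k j * (1 - 1 / (starRingEnd ℂ) (u j)) * (starRingEnd ℂ) (S j) := by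
      have h := congrFun hfix k
      simp only [pfMap] at h
      simp only [etaI]
      linear_combination -h
    rw [hk]
    refine le_trans (norm_sum_le _ _) ?_
    have hterm : ∀ j, ‖Z k j * (1 - 1 / (starRingEnd ℂ) (u j))
          * (starRingEnd ℂ) (S j)‖
        = ‖Z k j * S j‖ * (‖u j - 1‖ / ‖u j‖) := by
      intro j
      have hcu : (starRingEnd ℂ) (u j) ≠ 0 := fun h =>
        hu j (by simpa using congrArg (starRingEnd ℂ) h)
      have h1 : (1 : ℂ) - 1 / (starRingEnd ℂ) (u j)
          = (starRingEnd ℂ) ((u j - 1) / u j) := by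
        rw [map_div₀, map_sub, map_one]
        field_simp
      rw [h1]
      simp only [norm_mul, norm_div, Complex.norm_conj]
      ring
    calc ∑ j, ‖Z k j * (1 - 1 / (starRingEnd ℂ) (u j)) * (starRingEnd ℂ) (S j)‖
        = ∑ j, ‖Z k j * S j‖ * (‖u j - 1‖ / ‖u j‖) :=
          Finset.sum_congr rfl fun j _ => hterm j
      _ ≤ ∑ j, ‖Z k j * S j‖ * t :=
          Finset.sum_le_sum fun j _ =>
            mul_le_mul_of_nonneg_left (hratio_le j) (norm_nonneg _)
      _ = xiI Z S k * t := by simp only [xiI]; rw [Finset.sum_mul]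
  rcases le_or_gt t (rLow Z S σ) with hcase | hcase
  · intro i
    calc ‖u i - (1 - etaI Z σ i)‖ ≤ xiI Z S i * t := hw i
      _ ≤ xiI Z S i * rLow Z S σ := mul_le_mul_of_nonneg_left hcase (hxi i).le
      _ = rLow Z S σ * xiI Z S i := mul_comm _ _
  · exfalso
    have htpos : 0 < t := lt_of_le_of_lt hrlnn hcase
    have ht2l : rLow Z S σ ^ 2 < t ^ 2 := pow_lt_pow_left₀ hcase hrlnn two_ne_zero
    have ht2h : t ^ 2 < rHigh Z S σ ^ 2 := pow_lt_pow_left₀ hth htn two_ne_zero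
    have hQbar : ξb ^ 2 * t ^ 4 - G * t ^ 2 + ηb ^ 2 < 0 := by
      rw [hrlsq] at ht2l
      rw [div_lt_iff₀ (by positivity)] at ht2l
      rw [hrhsq] at ht2h
      rw [lt_div_iff₀ (by positivity)] at ht2h
      nlinarith [mul_pos (by nlinarith : (0:ℝ) < G + s - 2 * ξb ^ 2 * t ^ 2)
          (by nlinarith : (0:ℝ) < 2 * ξb ^ 2 * t ^ 2 - (G - s)),
        hs2, mul_pos hξpos hξpos]
    have hKt : t < 1 → (1 - t ^ 2) * xiI Z S i0 < 1 := by
      intro ht1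
      have h1 : 0 < 1 - t ^ 2 := by nlinarith
      have h2 : (1 - t ^ 2) * xiI Z S i0 ≤ (1 - t ^ 2) * ξb :=
        mul_le_mul_of_nonneg_left (hxi_le i0) h1.le
      have h3 : (1 - t ^ 2) * ξb < (1 - rLow Z S σ ^ 2) * ξb :=
        mul_lt_mul_of_pos_right (by linarith) hξpos
      nlinarith [hA]
    have hQi : xiI Z S i0 ^ 2 * t ^ 4
        - (1 - (2 * (xiI Z S i0 + (etaI Z σ i0).re) - xiI Z S i0 ^ 2
            - ‖etaI Z σ i0‖ ^ 2)) * t ^ 2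
        + ‖etaI Z σ i0‖ ^ 2 < 0 := by
      have a1 : xiI Z S i0 ^ 2 * t ^ 4 ≤ ξb ^ 2 * t ^ 4 :=
        mul_le_mul_of_nonneg_right (pow_le_pow_left₀ (hxi i0).le (hxi_le i0) 2)
          (by positivity)
      have a2 : ‖etaI Z σ i0‖ ^ 2 ≤ ηb ^ 2 :=
        pow_le_pow_left₀ (norm_nonneg _) (heta_le i0) 2
      have a3 : G * t ^ 2 ≤ (1 - gammaI Z S σ i0) * t ^ 2 :=
        mul_le_mul_of_nonneg_right (by rw [hGdef]; linarith [hgam_le i0]) (sq_nonneg t)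
      have a4 : gammaI Z S σ i0 = 2 * (xiI Z S i0 + (etaI Z σ i0).re) - xiI Z S i0 ^ 2
          - ‖etaI Z σ i0‖ ^ 2 := rfl
      rw [← a4]
      linarith [hQbar, a1, a2, a3]
    have hdist : ‖(1 - u i0) - etaI Z σ i0‖ ≤ t * xiI Z S i0 := by
      have he : (1 - u i0) - etaI Z σ i0 = -(u i0 - (1 - etaI Z σ i0)) := by ring
      rw [he, norm_neg, mul_comm]
      exact hw i0
    have hlt := ratio_lt_of_Q t (xiI Z S i0) (etaI Z σ i0) (1 - u i0) htpos (hxi i0).le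
      hKt hdist hQi
    have h1 : (1 : ℂ) - (1 - u i0) = u i0 := by ring
    rw [h1] at hlt
    have h2 : ‖1 - u i0‖ = ‖u i0 - 1‖ :=
      norm_sub_rev 1 (u i0)
    rw [h2] at hlt
    have h3 : t * ‖u i0‖ = ‖u i0 - 1‖ := by
      rw [htdef, div_mul_cancel₀ _ (ne_of_gt (hupos i0))]
    rw [h3] at hlt
    exact lt_irrefl _ hlt
end

section
/- For every r > 0 and every u ∈ ℂ^n such that u_i ≠ 0 and |u_i − 1| ≤ r·|u_i| for all i, the image F(u) satisfies |F(u)_i − (1 − η_i(σ))| ≤ r·ξ_i(S) for all i = 1,…,n. That is, F maps the set {u : u_i ≠ 0, |(u_i−1)/u_i| ≤ r for all i} into the closed polydisc centered at (1 − η_1(σ), …, 1 − η_n(σ)) with radii r·ξ_i(S). -/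
open Complex

/-- for every `r > 0`, the map `F` sends
`{u : u_i ≠ 0 and |u_i − 1| ≤ r·|u_i| for all i}` into the closed polydisc centered at
`(1 − η_1(σ), …, 1 − η_n(σ))` with radii `r·ξ_i(S)`. -/
theorem pf_map_into_polydisc {n : ℕ}
    (Z : Matrix (Fin n) (Fin n) ℂ)
    (S0 σ S : Fin n → ℂ) (hS : S = S0 + σ)
    (r : ℝ) (hr : 0 < r) :
    ∀ u : Fin n → ℂ, (∀ i, u i ≠ 0 ∧ ‖u i - 1‖ ≤ r * ‖u i‖) →
      ∀ i, ‖pfMap Z S σ u i - (1 - etaI Z σ i)‖ ≤ r * xiI Z S i := by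
  intro u hu i
  have key : pfMap Z S σ u i - (1 - etaI Z σ i)
      = ∑ j, Z i j * (1 - 1 / (starRingEnd ℂ) (u j)) * (starRingEnd ℂ) (S j) := by
    simp [pfMap, etaI]
  rw [key, xiI, Finset.mul_sum]
  refine le_trans (norm_sum_le _ _) (Finset.sum_le_sum fun j _ => ?_)
  obtain ⟨hne, hle⟩ := hu j
  have hc : (starRingEnd ℂ) (u j) ≠ 0 := by simpa using hne
  have h1 : ‖1 - 1 / (starRingEnd ℂ) (u j)‖ ≤ r := by
    rw [one_sub_div hc, norm_div]
    rw [div_le_iff₀ (by simpa [norm_pos_iff] using hc)]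
    calc ‖(starRingEnd ℂ) (u j) - 1‖
        = ‖u j - 1‖ := by
          rw [← Complex.norm_conj (u j - 1)]; simp
      _ ≤ r * ‖u j‖ := hle
      _ = r * ‖(starRingEnd ℂ) (u j)‖ := by simp
  calc ‖Z i j * (1 - 1 / (starRingEnd ℂ) (u j)) * (starRingEnd ℂ) (S j)‖
      = ‖Z i j‖ * ‖1 - 1 / (starRingEnd ℂ) (u j)‖
        * ‖S j‖ := by simp [norm_mul]
    _ ≤ ‖Z i j‖ * r * ‖S j‖ := by
        gcongr
    _ = r * ‖Z i j * S j‖ := by rw [norm_mul]; ring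
end
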